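/- Let N and M be nonempty finite sets, let u : N × M → ℝ, and let p be a natural number with 1 ≤ p ≤ |M|. Then the optimal value of the max-min model — the maximum, over z : M → {0,1} with ∑_{j ∈ M} z(j) = p, over y : N × M → ℝ with y(i,j) ≥ 0, ∑_{j ∈ M} y(i,j) = 1 for each i, and y(i,j) ≤ z(j) for all i,j, and over α ∈ ℝ with α ≤ ∑_{j ∈ M} u(i,j) · y(i,j) for every i ∈ N, of α — equals max over subsets S ⊆ M with |S| = p of min_{i ∈ N} max_{j ∈ S} u(i,j). -/
import Mathlib


open Finset

/-- The optimal value of the max-min model — maximizing the auxiliary variable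
`α` over binary station-opening variables `z` with `∑ j, z j = p`, fractional
assignments `y` with `y i j ≥ 0`, `∑ j, y i j = 1` for each customer `i`, and
`y i j ≤ z j`, and `α ≤ ∑ j, u i j * y i j` for every customer `i` — equals the
maximum over subsets `S ⊆ M` of cardinality `p` of
`min_{i ∈ N} max_{j ∈ S} u i j`. -/
theorem maxmin_optimal_value_eq_subset_max
    {N M : Type} [Fintype N] [Fintype M] [Nonempty N] [Nonempty M]
    (u : N → M → ℝ) (p : ℕ) (hp1 : 1 ≤ p) (hpM : p ≤ Fintype.card M) :
    ∃ V : ℝ,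
      IsGreatest
        {α : ℝ | ∃ (z : M → ℝ) (y : N → M → ℝ),
          (∀ j, z j = 0 ∨ z j = 1) ∧
          (∑ j, z j = (p : ℝ)) ∧
          (∀ i j, 0 ≤ y i j) ∧
          (∀ i, ∑ j, y i j = 1) ∧
          (∀ i j, y i j ≤ z j) ∧
          (∀ i, α ≤ ∑ j, u i j * y i j)} V ∧
      IsGreatest
        {v : ℝ | ∃ S : Finset M, S.card = p ∧
          ∃ hS : S.Nonempty,
            v = Finset.univ.inf' Finset.univ_nonempty
                  (fun i : N => S.sup' hS (u i))} V := by
  classical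
  set P : Finset (Finset M) := Finset.univ.powersetCard p with hP
  have hPmem : ∀ S : Finset M, S ∈ P ↔ S.card = p := by
    intro S; simp [hP, Finset.mem_powersetCard_univ]
  have hPne : P.Nonempty := by
    rw [hP]
    exact Finset.powersetCard_nonempty.mpr (by simpa using hpM)
  set g : Finset M → ℝ := fun S =>
    if h : S.Nonempty then
      Finset.univ.inf' Finset.univ_nonempty (fun i : N => S.sup' h (u i))
    else 0 with hg
  obtain ⟨S₀, hS₀P, hmax⟩ := Finset.exists_max_image P g hPne
  have hS₀card : S₀.card = p := (hPmem S₀).1 hS₀P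
  have hS₀ne : S₀.Nonempty := Finset.card_pos.mp (by omega)
  refine ⟨g S₀, ?_, ?_, ?_⟩
  · constructor
    · -- membership in the LP feasible-value set
      -- choose for each i a maximizer jmax i in S₀
      have hjm : ∀ i : N, ∃ j ∈ S₀, S₀.sup' hS₀ne (u i) = u i j := fun i =>
        Finset.exists_mem_eq_sup' hS₀ne (u i)
      choose jm hjmS hjmax using hjm
      refine ⟨fun j => if j ∈ S₀ then 1 else 0,
        fun i j => if j = jm i then 1 else 0, ?_, ?_, ?_, ?_, ?_, ?_⟩
      · intro j; by_cases h : j ∈ S₀ <;> simp [h]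
      · rw [Finset.sum_ite_mem]
        simp [Finset.univ_inter, hS₀card]
      · intro i j; by_cases h : j = jm i <;> simp [h]
      · intro i; simp
      · intro i j
        by_cases h : j = jm i
        · subst h; simp [hjmS i]
        · simp only [h, if_false]
          by_cases h' : j ∈ S₀ <;> simp [h']
      · intro i
        have : ∑ j, u i j * (if j = jm i then (1:ℝ) else 0) = u i (jm i) := by
          simp [mul_ite]
        rw [this]
        have h1 : g S₀ ≤ S₀.sup' hS₀ne (u i) := by
          rw [hg]; simp only [dif_pos hS₀ne]
          exact Finset.inf'_le _ (Finset.mem_univ i)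
        rw [hjmax i] at h1
        exact h1
    · -- upper bound
      rintro α ⟨z, y, hzb, hzsum, hy0, hysum, hyz, hα⟩
      set S : Finset M := Finset.univ.filter (fun j => z j = 1) with hS
      have hzero : ∀ j, j ∉ S → z j = 0 := by
        intro j hj
        rcases hzb j with h | h
        · exact h
        · exact absurd (by simp [hS, h]) hj
      have hScard : S.card = p := by
        have : ∑ j, z j = (S.card : ℝ) := by
          rw [Finset.card_eq_sum_ones, Nat.cast_sum]
          rw [← Finset.sum_subset (Finset.subset_univ S)
            (fun j _ hj => hzero j hj)]
          refine Finset.sum_congr rfl fun j hj => ?_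
          simp [hS] at hj
          simp [hj]
        rw [this] at hzsum
        exact_mod_cast hzsum
      have hSne : S.Nonempty := Finset.card_pos.mp (by omega)
      have hSP : S ∈ P := (hPmem S).2 hScard
      have hy0' : ∀ i j, j ∉ S → y i j = 0 := by
        intro i j hj
        have := hyz i j
        rw [hzero j hj] at this
        exact le_antisymm this (hy0 i j)
      have hysumS : ∀ i, ∑ j ∈ S, y i j = 1 := by
        intro i
        rw [Finset.sum_subset (Finset.subset_univ S)
          (fun j _ hj => hy0' i j hj)]
        exact hysum i
      have key : α ≤ g S := by
        rw [hg]; simp only [dif_pos hSne]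
        apply Finset.le_inf'
        intro i _
        calc α ≤ ∑ j, u i j * y i j := hα i
          _ = ∑ j ∈ S, u i j * y i j := by
              rw [Finset.sum_subset (Finset.subset_univ S)
                (fun j _ hj => by rw [hy0' i j hj, mul_zero])]
          _ ≤ ∑ j ∈ S, S.sup' hSne (u i) * y i j := by
              refine Finset.sum_le_sum fun j hj => ?_
              exact mul_le_mul_of_nonneg_right (Finset.le_sup' (u i) hj) (hy0 i j)
          _ = S.sup' hSne (u i) := by
              rw [← Finset.mul_sum, hysumS i, mul_one]
      exact key.trans (hmax S hSP)
  · exact ⟨S₀, hS₀card, hS₀ne, by rw [hg]; simp only [dif_pos hS₀ne]⟩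
  · rintro v ⟨S, hScard, hSne, rfl⟩
    have hSP : S ∈ P := (hPmem S).2 hScard
    have : g S = Finset.univ.inf' Finset.univ_nonempty
        (fun i : N => S.sup' hSne (u i)) := by
      rw [hg]; simp only [dif_pos hSne]
    rw [← this]
    exact hmax S hSP
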